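/- Sion's minimax theorem: if X and Y are nonempty convex compact subsets of linear topological spaces and f : X × Y → ℝ is continuous, quasi-concave in the first variable and quasi-convex in the second variable, then max_{x∈X} min_{y∈Y} f(x,y) = min_{y∈Y} max_{x∈X} f(x,y). -/

import Mathlib

open Set Filter Topology

/-- Komiya's Lemma 1 for Sion's minimax theorem. -/
lemma sion_aux1
    {E F : Type*} [AddCommGroup E] [Module ℝ E] [TopologicalSpace E]
    [IsTopologicalAddGroup E] [ContinuousSMul ℝ E]
    [AddCommGroup F] [Module ℝ F] [TopologicalSpace F]
    [IsTopologicalAddGroup F] [ContinuousSMul ℝ F]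
    {X : Set E} {Y : Set F}
    (hYc : Convex ℝ Y)
    (f : E → F → ℝ)
    (hf : ContinuousOn (fun p : E × F => f p.1 p.2) (X ×ˢ Y))
    (hqc : ∀ y ∈ Y, QuasiconcaveOn ℝ X (fun x => f x y))
    (hqx : ∀ x ∈ X, QuasiconvexOn ℝ Y (fun y => f x y))
    {c c' : ℝ} (hcc : c < c')
    (hP : ∀ y ∈ Y, ∃ x ∈ X, c' < f x y)
    {y₁ y₂ : F} (hy₁ : y₁ ∈ Y) (hy₂ : y₂ ∈ Y) :
    ∃ x ∈ X, c < f x y₁ ∧ c < f x y₂ := by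
  by_contra hcon
  push_neg at hcon
  have hcon' : ∀ x ∈ X, f x y₁ ≤ c ∨ f x y₂ ≤ c := by
    intro x hx
    by_cases h : c < f x y₁
    · exact Or.inr (hcon x hx h)
    · exact Or.inl (not_lt.mp h)
  clear hcon
  -- the segment
  set z : ℝ → F := fun t => (1 - t) • y₁ + t • y₂ with hz
  have hzY : ∀ t ∈ Icc (0:ℝ) 1, z t ∈ Y := by
    intro t ht
    exact hYc hy₁ hy₂ (by linarith [ht.2]) ht.1 (by ring)
  have hz0 : z 0 = y₁ := by simp [hz]
  have hz1 : z 1 = y₂ := by simp [hz]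
  -- quasiconvexity: points on the segment are dominated by the endpoint max
  have hmax : ∀ x ∈ X, ∀ t ∈ Icc (0:ℝ) 1,
      f x (z t) ≤ max (f x y₁) (f x y₂) := by
    intro x hx t ht
    have h := hqx x hx (max (f x y₁) (f x y₂))
    exact (h ⟨hy₁, le_max_left _ _⟩ ⟨hy₂, le_max_right _ _⟩
      (by linarith [ht.2]) ht.1 (by ring)).2
  -- superlevel sets along the segment
  set C : ℝ → Set E := fun t => {x ∈ X | c' ≤ f x (z t)} with hC
  have hCne : ∀ t ∈ Icc (0:ℝ) 1, (C t).Nonempty := by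
    intro t ht
    obtain ⟨x, hx, hfx⟩ := hP (z t) (hzY t ht)
    exact ⟨x, hx, hfx.le⟩
  have hCconv : ∀ t ∈ Icc (0:ℝ) 1, Convex ℝ (C t) := fun t ht =>
    hqc (z t) (hzY t ht) c'
  -- continuity of slices in the first variable
  have hcont : ∀ y ∈ Y, ContinuousOn (fun x => f x y) X := by
    intro y hy
    have h : (fun x => f x y) = (fun p : E × F => f p.1 p.2) ∘ (fun x => (x, y)) := rfl
    rw [h]
    exact hf.comp ((continuous_id.prodMk continuous_const).continuousOn)
      (fun x hx => ⟨hx, hy⟩)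
  -- relative opens realizing the strict sublevel sets at y₁, y₂
  obtain ⟨V₁, hV₁o, hV₁⟩ := continuousOn_iff'.mp (hcont y₁ hy₁) (Iio c') isOpen_Iio
  obtain ⟨V₂, hV₂o, hV₂⟩ := continuousOn_iff'.mp (hcont y₂ hy₂) (Iio c') isOpen_Iio
  have hV₁X : ∀ x ∈ X, (x ∈ V₁ ↔ f x y₁ < c') := by
    intro x hx
    constructor
    · intro h
      have h2 : x ∈ (fun x => f x y₁) ⁻¹' (Iio c') ∩ X := by rw [hV₁]; exact ⟨h, hx⟩
      exact h2.1
    · intro h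
      have h2 : x ∈ V₁ ∩ X := by rw [← hV₁]; exact ⟨h, hx⟩
      exact h2.1
  have hV₂X : ∀ x ∈ X, (x ∈ V₂ ↔ f x y₂ < c') := by
    intro x hx
    constructor
    · intro h
      have h2 : x ∈ (fun x => f x y₂) ⁻¹' (Iio c') ∩ X := by rw [hV₂]; exact ⟨h, hx⟩
      exact h2.1
    · intro h
      have h2 : x ∈ V₂ ∩ X := by rw [← hV₂]; exact ⟨h, hx⟩
      exact h2.1
  -- dichotomy from connectedness of C t
  have hdich : ∀ t ∈ Icc (0:ℝ) 1,
      (∀ x ∈ C t, c' ≤ f x y₁) ∨ (∀ x ∈ C t, c' ≤ f x y₂) := by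
    intro t ht
    have hpre : IsPreconnected (C t) := (hCconv t ht).isPreconnected
    have hcover : C t ⊆ V₁ ∪ V₂ := by
      intro x hx
      rcases hcon' x hx.1 with h | h
      · exact Or.inl ((hV₁X x hx.1).mpr (lt_of_le_of_lt h hcc))
      · exact Or.inr ((hV₂X x hx.1).mpr (lt_of_le_of_lt h hcc))
    by_cases h₁ : (C t ∩ V₁).Nonempty
    · by_cases h₂ : (C t ∩ V₂).Nonempty
      · exfalso
        obtain ⟨x, hxC, hx₁, hx₂⟩ := hpre V₁ V₂ hV₁o hV₂o hcover h₁ h₂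
        have hb₁ := (hV₁X x hxC.1).mp hx₁
        have hb₂ := (hV₂X x hxC.1).mp hx₂
        have hm := hmax x hxC.1 t ht
        have hc2 := hxC.2
        rcases max_cases (f x y₁) (f x y₂) with ⟨he, _⟩ | ⟨he, _⟩ <;> linarith
      · right
        intro x hx
        have hnot : x ∉ V₂ := fun hmem => h₂ ⟨x, hx, hmem⟩
        exact not_lt.mp (fun hlt => hnot ((hV₂X x hx.1).mpr hlt))
    · left
      intro x hx
      have hnot : x ∉ V₁ := fun hmem => h₁ ⟨x, hx, hmem⟩
      exact not_lt.mp (fun hlt => hnot ((hV₁X x hx.1).mpr hlt))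
  -- continuity along the segment for fixed x ∈ X
  have hzc : Continuous z := by
    apply Continuous.add
    · exact (continuous_const.sub continuous_id).smul continuous_const
    · exact continuous_id.smul continuous_const
  have hseg : ∀ x ∈ X, ContinuousOn (fun t => f x (z t)) (Icc (0:ℝ) 1) := by
    intro x hx
    have h : (fun t => f x (z t)) =
        (fun p : E × F => f p.1 p.2) ∘ (fun t => (x, z t)) := rfl
    rw [h]
    exact hf.comp ((continuous_const.prodMk hzc).continuousOn)
      (fun t ht => ⟨hx, hzY t ht⟩)
  -- the two pieces of the parameter interval
  set I : Set ℝ := {t ∈ Icc (0:ℝ) 1 | ∀ x ∈ C t, c' ≤ f x y₁} with hIdef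
  set J : Set ℝ := {t ∈ Icc (0:ℝ) 1 | ∀ x ∈ C t, c' ≤ f x y₂} with hJdef
  -- I and J are disjoint
  have hdisj : ∀ t, t ∈ I → t ∈ J → False := by
    intro t htI htJ
    obtain ⟨x, hxC⟩ := hCne t htI.1
    have h1 := htI.2 x hxC
    have h2 := htJ.2 x hxC
    rcases hcon' x hxC.1 with h | h <;> linarith
  -- a consequence of sequential limits: a common witness point
  have hkey : ∀ (u : ℕ → ℝ) (t : ℝ), (∀ n, u n ∈ Icc (0:ℝ) 1) →
      Tendsto u atTop (𝓝 t) → t ∈ Icc (0:ℝ) 1 →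
      ∃ x ∈ C t, ∀ᶠ n in atTop, x ∈ C (u n) := by
    intro u t hu hlim ht
    obtain ⟨x, hxX, hfx⟩ := hP (z t) (hzY t ht)
    refine ⟨x, ⟨hxX, hfx.le⟩, ?_⟩
    have hwa : Tendsto u atTop (𝓝[Icc (0:ℝ) 1] t) :=
      tendsto_nhdsWithin_of_tendsto_nhds_of_eventually_within u hlim
        (Eventually.of_forall hu)
    have htend : Tendsto (fun n => f x (z (u n))) atTop (𝓝 (f x (z t))) :=
      ((hseg x hxX t ht).tendsto).comp hwa
    have hev : ∀ᶠ n in atTop, c' < f x (z (u n)) :=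
      htend.eventually (eventually_gt_nhds hfx)
    filter_upwards [hev] with n hn
    exact ⟨hxX, hn.le⟩
  -- I is closed
  have hIclosed : IsClosed I := by
    apply IsSeqClosed.isClosed
    intro u t hu hlim
    have ht : t ∈ Icc (0:ℝ) 1 :=
      isClosed_Icc.mem_of_tendsto hlim (Eventually.of_forall fun n => (hu n).1)
    obtain ⟨x, hxC, hev⟩ := hkey u t (fun n => (hu n).1) hlim ht
    obtain ⟨n, hn⟩ := hev.exists
    have hx1 : c' ≤ f x y₁ := (hu n).2 x hn
    refine ⟨ht, ?_⟩
    rcases hdich t ht with h | h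
    · exact h
    · exfalso
      have hx2 : c' ≤ f x y₂ := h x hxC
      rcases hcon' x hxC.1 with hh | hh <;> linarith
  -- J is closed
  have hJclosed : IsClosed J := by
    apply IsSeqClosed.isClosed
    intro u t hu hlim
    have ht : t ∈ Icc (0:ℝ) 1 :=
      isClosed_Icc.mem_of_tendsto hlim (Eventually.of_forall fun n => (hu n).1)
    obtain ⟨x, hxC, hev⟩ := hkey u t (fun n => (hu n).1) hlim ht
    obtain ⟨n, hn⟩ := hev.exists
    have hx2 : c' ≤ f x y₂ := (hu n).2 x hn
    refine ⟨ht, ?_⟩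
    rcases hdich t ht with h | h
    · exfalso
      have hx1 : c' ≤ f x y₁ := h x hxC
      rcases hcon' x hxC.1 with hh | hh <;> linarith
    · exact h
  -- endpoints
  have h0I : (0:ℝ) ∈ I := by
    refine ⟨⟨le_refl _, zero_le_one⟩, ?_⟩
    intro x hx
    have := hx.2
    rwa [hz0] at this
  have h1J : (1:ℝ) ∈ J := by
    refine ⟨⟨zero_le_one, le_refl _⟩, ?_⟩
    intro x hx
    have := hx.2
    rwa [hz1] at this
  -- connectedness contradiction
  have h1nI : (1:ℝ) ∉ I := fun h => hdisj 1 h h1J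
  have h0nJ : (0:ℝ) ∉ J := fun h => hdisj 0 h0I h
  have hcover2 : Icc (0:ℝ) 1 ⊆ Iᶜ ∪ Jᶜ := by
    intro t _
    by_cases h : t ∈ I
    · exact Or.inr (fun hJ => hdisj t h hJ)
    · exact Or.inl h
  obtain ⟨t, htIcc, htI, htJ⟩ :=
    isPreconnected_Icc (a := (0:ℝ)) (b := 1) Iᶜ Jᶜ
      hIclosed.isOpen_compl hJclosed.isOpen_compl hcover2
      ⟨1, ⟨zero_le_one, le_refl _⟩, h1nI⟩
      ⟨0, ⟨le_refl _, zero_le_one⟩, h0nJ⟩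
  rcases hdich t htIcc with h | h
  · exact htI ⟨htIcc, h⟩
  · exact htJ ⟨htIcc, h⟩

/-- Komiya's Lemma 2: a common witness for finitely many `y`'s. -/
lemma sion_aux2
    {E F : Type*} [AddCommGroup E] [Module ℝ E] [TopologicalSpace E]
    [IsTopologicalAddGroup E] [ContinuousSMul ℝ E]
    [AddCommGroup F] [Module ℝ F] [TopologicalSpace F]
    [IsTopologicalAddGroup F] [ContinuousSMul ℝ F]
    {Y : Set F} (hYc : Convex ℝ Y) (f : E → F → ℝ)
    (S : Finset F) :
    ↑S ⊆ Y → ∀ (X : Set E), X.Nonempty → IsCompact X →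
    ContinuousOn (fun p : E × F => f p.1 p.2) (X ×ˢ Y) →
    (∀ y ∈ Y, QuasiconcaveOn ℝ X (fun x => f x y)) →
    (∀ x ∈ X, QuasiconvexOn ℝ Y (fun y => f x y)) →
    ∀ c c' : ℝ, c < c' → (∀ y ∈ Y, ∃ x ∈ X, c' < f x y) →
    ∃ x ∈ X, ∀ y ∈ S, c < f x y := by
  induction S using Finset.cons_induction with
  | empty =>
    intro _ X hXne _ _ _ _ c c' _ _
    obtain ⟨x, hx⟩ := hXne
    exact ⟨x, hx, by simp⟩
  | cons a s ha ih =>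
    intro hSY X hXne hXcomp hf hqc hqx c c' hcc hP
    have haY : a ∈ Y := hSY (by simp)
    have hsY : ↑s ⊆ Y := by
      intro y hy
      exact hSY (by simp [hy])
    set m : ℝ := (c + c') / 2 with hm
    have hcm : c < m := by simp [hm]; linarith
    have hmc' : m < c' := by simp [hm]; linarith
    -- the restricted domain
    set Z : Set E := {x ∈ X | m ≤ f x a} with hZ
    have hZX : Z ⊆ X := fun x hx => hx.1
    -- Lemma 1 over X at levels m < c'
    have hL1 : ∀ y ∈ Y, ∃ x ∈ X, m < f x y ∧ m < f x a := fun y hy =>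
      sion_aux1 hYc f hf hqc hqx hmc' hP hy haY
    -- Z is nonempty
    have hZne : Z.Nonempty := by
      obtain ⟨x, hx, hfx⟩ := hP a haY
      exact ⟨x, hx, le_of_lt (lt_trans hmc' hfx)⟩
    -- Z is compact
    have hcontA : ContinuousOn (fun x => f x a) X := by
      have h : (fun x => f x a) = (fun p : E × F => f p.1 p.2) ∘ (fun x => (x, a)) := rfl
      rw [h]
      exact hf.comp ((continuous_id.prodMk continuous_const).continuousOn)
        (fun x hx => ⟨hx, haY⟩)
    have hZcomp : IsCompact Z := by
      haveI : CompactSpace X := isCompact_iff_compactSpace.mp hXcomp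
      have hgc : Continuous fun x : X => f ↑x a := hcontA.restrict
      have hclosed : IsClosed {x : X | m ≤ f ↑x a} :=
        isClosed_le continuous_const hgc
      have himg : Z = Subtype.val '' {x : X | m ≤ f ↑x a} := by
        ext x
        constructor
        · rintro ⟨hxX, hxm⟩
          exact ⟨⟨x, hxX⟩, hxm, rfl⟩
        · rintro ⟨⟨x', hx'⟩, hxm, rfl⟩
          exact ⟨hx', hxm⟩
      rw [himg]
      exact (hclosed.isCompact).image continuous_subtype_val
    -- restricted hypotheses
    have hfZ : ContinuousOn (fun p : E × F => f p.1 p.2) (Z ×ˢ Y) :=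
      hf.mono (Set.prod_mono hZX Set.Subset.rfl)
    have hqcZ : ∀ y ∈ Y, QuasiconcaveOn ℝ Z (fun x => f x y) := by
      intro y hy b
      have hconvZ : Convex ℝ Z := hqc a haY m
      have heq : {x ∈ Z | b ≤ f x y} = Z ∩ {x ∈ X | b ≤ f x y} := by
        ext x
        exact ⟨fun ⟨h1, h2⟩ => ⟨h1, h1.1, h2⟩, fun ⟨h1, _, h3⟩ => ⟨h1, h3⟩⟩
      rw [heq]
      exact hconvZ.inter (hqc y hy b)
    have hqxZ : ∀ x ∈ Z, QuasiconvexOn ℝ Y (fun y => f x y) := fun x hx =>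
      hqx x (hZX hx)
    have hPZ : ∀ y ∈ Y, ∃ x ∈ Z, m < f x y := by
      intro y hy
      obtain ⟨x, hx, h1, h2⟩ := hL1 y hy
      exact ⟨x, ⟨hx, h2.le⟩, h1⟩
    obtain ⟨x, hxZ, hxs⟩ := ih hsY Z hZne hZcomp hfZ hqcZ hqxZ c m hcm hPZ
    refine ⟨x, hZX hxZ, ?_⟩
    intro y hy
    rcases Finset.mem_cons.mp hy with rfl | hy'
    · exact lt_of_lt_of_le hcm hxZ.2
    · exact hxs y hy'

/-- Sion's minimax theorem. -/
theorem sion_minimax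
    {E F : Type*} [AddCommGroup E] [Module ℝ E] [TopologicalSpace E]
    [IsTopologicalAddGroup E] [ContinuousSMul ℝ E]
    [AddCommGroup F] [Module ℝ F] [TopologicalSpace F]
    [IsTopologicalAddGroup F] [ContinuousSMul ℝ F]
    {X : Set E} {Y : Set F} (hXne : X.Nonempty) (hYne : Y.Nonempty)
    (hXc : Convex ℝ X) (hYc : Convex ℝ Y)
    (hXcomp : IsCompact X) (hYcomp : IsCompact Y)
    (f : E → F → ℝ)
    (hf : ContinuousOn (fun p : E × F => f p.1 p.2) (X ×ˢ Y))
    (hqc : ∀ y ∈ Y, QuasiconcaveOn ℝ X (fun x => f x y))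
    (hqx : ∀ x ∈ X, QuasiconvexOn ℝ Y (fun y => f x y)) :
    ⨆ x : X, ⨅ y : Y, f x y = ⨅ y : Y, ⨆ x : X, f x y := by
  classical
  haveI hXneS : Nonempty X := hXne.to_subtype
  haveI hYneS : Nonempty Y := hYne.to_subtype
  -- boundedness of f on X ×ˢ Y
  have hKcomp : IsCompact ((fun p : E × F => f p.1 p.2) '' (X ×ˢ Y)) :=
    (hXcomp.prod hYcomp).image_of_continuousOn hf
  obtain ⟨M, hM⟩ := hKcomp.bddAbove
  obtain ⟨m, hm⟩ := hKcomp.bddBelow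
  have hMf : ∀ x ∈ X, ∀ y ∈ Y, f x y ≤ M := fun x hx y hy =>
    hM ⟨(x, y), ⟨hx, hy⟩, rfl⟩
  have hmf : ∀ x ∈ X, ∀ y ∈ Y, m ≤ f x y := fun x hx y hy =>
    hm ⟨(x, y), ⟨hx, hy⟩, rfl⟩
  have hbddA : ∀ y : Y, BddAbove (Set.range fun x : X => f ↑x ↑y) := by
    intro y
    refine ⟨M, ?_⟩
    rintro r ⟨x, prfl⟩
    exact prfl ▸ hMf ↑x x.2 ↑y y.2
  have hbddB : ∀ x : X, BddBelow (Set.range fun y : Y => f ↑x ↑y) := by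
    intro x
    refine ⟨m, ?_⟩
    rintro r ⟨y, prfl⟩
    exact prfl ▸ hmf ↑x x.2 ↑y y.2
  have hbddInf : BddBelow (Set.range fun y : Y => ⨆ x : X, f ↑x ↑y) := by
    refine ⟨m, ?_⟩
    rintro r ⟨y, prfl⟩
    subst prfl
    obtain ⟨x⟩ := hXneS
    exact le_trans (hmf ↑x x.2 ↑y y.2) (le_ciSup (hbddA y) x)
  have hbddSup : BddAbove (Set.range fun x : X => ⨅ y : Y, f ↑x ↑y) := by
    refine ⟨M, ?_⟩
    rintro r ⟨x, prfl⟩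
    subst prfl
    obtain ⟨y⟩ := hYneS
    exact le_trans (ciInf_le (hbddB x) y) (hMf ↑x x.2 ↑y y.2)
  -- easy inequality:  sup inf ≤ inf sup
  have heasy : ⨆ x : X, ⨅ y : Y, f ↑x ↑y ≤ ⨅ y : Y, ⨆ x : X, f ↑x ↑y := by
    refine le_ciInf fun y => ciSup_le fun x => ?_
    exact le_trans (ciInf_le (hbddB x) y) (le_ciSup (hbddA y) x)
  refine le_antisymm heasy ?_
  -- hard inequality, by contradiction
  by_contra hlt
  push_neg at hlt
  obtain ⟨c₂, hac₂, hc₂b⟩ := exists_between hlt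
  obtain ⟨c₁, hac₁, hc₁c₂⟩ := exists_between hac₂
  -- the level c₂ is exceeded over X for every y
  have hP : ∀ y ∈ Y, ∃ x ∈ X, c₂ < f x y := by
    intro y hy
    have h1 : (⨅ y : Y, ⨆ x : X, f ↑x ↑y) ≤ ⨆ x : X, f ↑x y :=
      ciInf_le hbddInf ⟨y, hy⟩
    have h2 : c₂ < ⨆ x : X, f ↑x y := lt_of_lt_of_le hc₂b h1
    obtain ⟨x, hx⟩ := exists_lt_of_lt_ciSup h2
    exact ⟨↑x, x.2, hx⟩
  -- cover X by strict sublevel sets at level c₁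
  haveI : CompactSpace X := isCompact_iff_compactSpace.mp hXcomp
  have hUopen : ∀ y : Y, IsOpen {x : X | f ↑x ↑y < c₁} := by
    intro y
    have hcy : ContinuousOn (fun x => f x (↑y : F)) X := by
      have h : (fun x => f x (↑y : F)) =
          (fun p : E × F => f p.1 p.2) ∘ (fun x => (x, (↑y : F))) := rfl
      rw [h]
      exact hf.comp ((continuous_id.prodMk continuous_const).continuousOn)
        (fun x hx => ⟨hx, y.2⟩)
    exact isOpen_lt hcy.restrict continuous_const
  have hUcover : (Set.univ : Set X) ⊆ ⋃ y : Y, {x : X | f ↑x ↑y < c₁} := by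
    intro x _
    have h1 : (⨅ y : Y, f ↑x ↑y) ≤ ⨆ x : X, ⨅ y : Y, f ↑x ↑y :=
      le_ciSup hbddSup x
    have h2 : (⨅ y : Y, f ↑x ↑y) < c₁ := lt_of_le_of_lt h1 hac₁
    obtain ⟨y, hy⟩ := exists_lt_of_ciInf_lt h2
    exact Set.mem_iUnion.mpr ⟨y, hy⟩
  obtain ⟨t, ht⟩ := isCompact_univ.elim_finite_subcover
    (fun y : Y => {x : X | f ↑x ↑y < c₁}) hUopen hUcover
  -- apply Lemma 2 to the finite set of centers
  set S : Finset F := t.image (fun y : Y => (↑y : F)) with hS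
  have hSY : ↑S ⊆ Y := by
    intro y hy
    simp only [hS, Finset.coe_image, Set.mem_image] at hy
    obtain ⟨y', _, rfl⟩ := hy
    exact y'.2
  obtain ⟨x, hxX, hxS⟩ :=
    sion_aux2 hYc f S hSY X hXne hXcomp hf hqc hqx c₁ c₂ hc₁c₂ hP
  have hxU : (⟨x, hxX⟩ : X) ∈ ⋃ y ∈ t, {x : X | f ↑x ↑y < c₁} :=
    ht (Set.mem_univ _)
  obtain ⟨y, hyt, hylt⟩ := Set.mem_iUnion₂.mp hxU
  have hyS : (↑y : F) ∈ S := by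
    rw [hS]; exact Finset.mem_image_of_mem _ hyt
  have := hxS ↑y hyS
  exact absurd hylt (not_lt.mpr this.le)
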